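/- Let Λ be a set of nonvertical planes in ℝ³ in general position and let C₁, C₂ be corridors determined by triples of planes of Λ. If C₁ is immersed in C₂, then C₂ is not immersed in C₁. -/

import Mathlib

open scoped Classical

noncomputable section

/-- A nonvertical plane in ℝ³, identified with the (affine) function `ℝ² → ℝ` whose graph it is
(curried). -/
abbrev PP : Type := ℝ → ℝ → ℝ

/-- `a` is an affine function, i.e. its graph is a nonvertical plane. -/
def IsAffinePlane (a : PP) : Prop :=
  ∃ α β δ : ℝ, ∀ x y : ℝ, a x y = α * x + β * y + δ

/-- A set of nonvertical planes in general position: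
the linear parts of any two are distinct (the difference is nonconstant, so any two planes
meet in a line), any three planes meet in exactly one point, and no four planes have a
common point. -/
def PlaneFamily (Λ : Finset PP) : Prop :=
  (∀ a ∈ Λ, IsAffinePlane a) ∧
  (∀ a ∈ Λ, ∀ b ∈ Λ, a ≠ b → ∃ x y x' y' : ℝ, a x y - b x y ≠ a x' y' - b x' y') ∧
  (∀ a ∈ Λ, ∀ b ∈ Λ, ∀ c ∈ Λ, a ≠ b → a ≠ c → b ≠ c →
    ∃! q : ℝ × ℝ, a q.1 q.2 = b q.1 q.2 ∧ a q.1 q.2 = c q.1 q.2) ∧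
  (∀ a ∈ Λ, ∀ b ∈ Λ, ∀ c ∈ Λ, ∀ d ∈ Λ, a ≠ b → a ≠ c → a ≠ d → b ≠ c → b ≠ d → c ≠ d →
    ¬ ∃ x y : ℝ, a x y = b x y ∧ a x y = c x y ∧ a x y = d x y)

/-- The level of the point `(x, y, z)`: the number of members of `Λ` passing strictly below it. -/
def level (Λ : Finset PP) (x y z : ℝ) : ℕ :=
  (Λ.filter fun a => a x y < z).card

/-- The triple `s = {a,b,c}` spans a `k`-corridor: its common (triple intersection) point
is at level `k`. -/
def IsKCorridorTriple (Λ : Finset PP) (k : ℕ) (s : Finset PP) : Prop :=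
  ∃ x y z : ℝ, (∀ a ∈ s, a x y = z) ∧ level Λ x y z = k

/-- The set `C^k` of `k`-corridors, encoded by the 3-element subsets of `Λ` spanning them. -/
def kCorridors (Λ : Finset PP) (k : ℕ) : Finset (Finset PP) :=
  (Λ.powersetCard 3).filter (IsKCorridorTriple Λ k)

/-- The corridor of a triple `s`: the open region strictly between the lower and the upper
envelope of the three planes in `s`. Points of ℝ³ are `(x, (y, z))`. -/
def corridorSet (s : Finset PP) : Set (ℝ × ℝ × ℝ) :=
  {p | (∃ a ∈ s, a p.1 p.2.1 < p.2.2) ∧ (∃ a ∈ s, p.2.2 < a p.1 p.2.1)}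

/-- The common intersection of the members of `s`. -/
def curveSet (s : Finset PP) : Set (ℝ × ℝ × ℝ) :=
  {p | ∀ a ∈ s, a p.1 p.2.1 = p.2.2}

/-- The corridor spanned by `s₁` is immersed in the corridor spanned by `s₂`: they share
exactly one plane, and the intersection line of the other two planes of `s₁` is fully
contained in the corridor of `s₂`. -/
def Immersed (s₁ s₂ : Finset PP) : Prop :=
  (s₁ ∩ s₂).card = 1 ∧ curveSet (s₁ \ s₂) ⊆ corridorSet s₂

/-- `X^k`: the number of ordered pairs of `k`-corridors such that the first is immersed
in the second. -/
def numImmersedPairs (Λ : Finset PP) (k : ℕ) : ℕ :=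
  ((kCorridors Λ k ×ˢ kCorridors Λ k).filter fun q => Immersed q.1 q.2).card

/-- Let `Λ` be a set of nonvertical planes in ℝ³ in general position and let
`C₁, C₂` be corridors determined by triples of planes of `Λ`. If `C₁` is immersed in `C₂`,
then `C₂` is not immersed in `C₁`. -/
lemma tail_neg (c1 c2 s1 s2 s3 : ℝ) (h1 : s1 < 0) (h2 : s2 < 0) (h3 : s3 < 0)
    (h : ∀ t : ℝ, 0 < c1 + t * s1 ∨ 0 < c2 + t * s2 ∨ 0 < t * s3) : False := by
  set t : ℝ := max 1 (max (c1 / (-s1)) (c2 / (-s2))) with ht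
  have ht1 : (1:ℝ) ≤ t := le_max_left _ _
  have hA : c1 / (-s1) ≤ t := le_trans (le_max_left _ _) (le_max_right _ _)
  have hB : c2 / (-s2) ≤ t := le_trans (le_max_right _ _) (le_max_right _ _)
  have hA' : c1 ≤ t * (-s1) := by
    rw [div_le_iff₀ (by linarith : (0:ℝ) < -s1)] at hA; linarith
  have hB' : c2 ≤ t * (-s2) := by
    rw [div_le_iff₀ (by linarith : (0:ℝ) < -s2)] at hB; linarith
  rcases h (t + 1) with h' | h' | h'
  · nlinarith
  · nlinarith
  · nlinarith [mul_neg_of_pos_of_neg (show (0:ℝ) < t + 1 by linarith) h3]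

lemma tail_pos (c1 c2 s1 s2 s3 : ℝ) (h1 : 0 < s1) (h2 : 0 < s2) (h3 : 0 < s3)
    (h : ∀ t : ℝ, 0 < c1 + t * s1 ∨ 0 < c2 + t * s2 ∨ 0 < t * s3) : False := by
  apply tail_neg c1 c2 (-s1) (-s2) (-s3) (by linarith) (by linarith) (by linarith)
  intro t
  rcases h (-t) with h' | h' | h'
  · left; nlinarith
  · right; left; nlinarith
  · right; right; nlinarith

lemma UL (u w k : PP) (u1 u2 u0 w1 w2 w0 k1 k2 k0 v1 v2 : ℝ)
    (hu : ∀ x y, u x y = u1*x + u2*y + u0)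
    (hw : ∀ x y, w x y = w1*x + w2*y + w0)
    (hk : ∀ x y, k x y = k1*x + k2*y + k0)
    (hv : v1 ≠ 0 ∨ v2 ≠ 0)
    (h1 : v1*(u1-w1) + v2*(u2-w2) = 0)
    (h2 : v1*(u1-k1) + v2*(u2-k2) = 0)
    (he : ∃! q : ℝ × ℝ, u q.1 q.2 = w q.1 q.2 ∧ u q.1 q.2 = k q.1 q.2) : False := by
  obtain ⟨r, ⟨hr1, hr2⟩, hr⟩ := he
  rw [hu, hw] at hr1
  rw [hu, hk] at hr2
  have key : ((r.1 + v1, r.2 + v2) : ℝ × ℝ) = r := by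
    apply hr
    constructor
    · show u (r.1 + v1) (r.2 + v2) = w (r.1 + v1) (r.2 + v2)
      rw [hu, hw]; linear_combination hr1 + h1
    · show u (r.1 + v1) (r.2 + v2) = k (r.1 + v1) (r.2 + v2)
      rw [hu, hk]; linear_combination hr2 + h2
  have k1' := congrArg Prod.fst key
  have k2' := congrArg Prod.snd key
  simp only at k1' k2'
  rcases hv with hv | hv
  · exact hv (by linarith)
  · exact hv (by linarith)

lemma slope_comp (a b d e f : PP)
    (a1 a2 a0 b1 b2 b0 d1 d2 d0 e1 e2 e0 f1 f2 f0 v1 v2 qx qy : ℝ)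
    (hA : ∀ x y, a x y = a1*x + a2*y + a0) (hB : ∀ x y, b x y = b1*x + b2*y + b0)
    (hD : ∀ x y, d x y = d1*x + d2*y + d0) (hE : ∀ x y, e x y = e1*x + e2*y + e0)
    (hF : ∀ x y, f x y = f1*x + f2*y + f0)
    (hvab : v1*(a1-b1) + v2*(a2-b2) = 0)
    (hvde : v1*(d1-e1) + v2*(d2-e2) = 0)
    (hq1 : a qx qy = b qx qy) (hq2 : a qx qy = f qx qy)
    (hcor : ∀ x y : ℝ, a x y = b x y → (a x y < d x y ∨ a x y < e x y ∨ a x y < f x y)) :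
    ¬ ((v1*d1+v2*d2 < v1*a1+v2*a2) ∧ (v1*f1+v2*f2 < v1*a1+v2*a2)) ∧
    ¬ ((v1*a1+v2*a2 < v1*d1+v2*d2) ∧ (v1*a1+v2*a2 < v1*f1+v2*f2)) := by
  rw [hA, hB] at hq1
  rw [hA, hF] at hq2
  have key : ∀ t : ℝ,
      0 < (d1*qx + d2*qy + d0 - (a1*qx + a2*qy + a0)) + t * ((v1*d1+v2*d2) - (v1*a1+v2*a2)) ∨
      0 < (e1*qx + e2*qy + e0 - (a1*qx + a2*qy + a0)) + t * ((v1*e1+v2*e2) - (v1*a1+v2*a2)) ∨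
      0 < t * ((v1*f1+v2*f2) - (v1*a1+v2*a2)) := by
    intro t
    have hab' : a (qx + t*v1) (qy + t*v2) = b (qx + t*v1) (qy + t*v2) := by
      rw [hA, hB]; linear_combination hq1 + t*hvab
    rcases hcor _ _ hab' with h | h | h
    · left; rw [hA, hD] at h; nlinarith [h]
    · right; left; rw [hA, hE] at h; nlinarith [h]
    · right; right; rw [hA, hF] at h; nlinarith [h, hq2]
  have hse : v1*e1 + v2*e2 = v1*d1 + v2*d2 := by linear_combination -hvde
  constructor
  · rintro ⟨h1, h2⟩
    exact tail_neg _ _ _ _ _ (by linarith) (by linarith) (by linarith) key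
  · rintro ⟨h1, h2⟩
    exact tail_pos _ _ _ _ _ (by linarith) (by linarith) (by linarith) key

theorem statement15 (Λ : Finset PP) (hΛ : PlaneFamily Λ)
    (s₁ s₂ : Finset PP) (hs₁ : s₁ ⊆ Λ) (hs₂ : s₂ ⊆ Λ)
    (hc₁ : s₁.card = 3) (hc₂ : s₂.card = 3)
    (h : Immersed s₁ s₂) : ¬ Immersed s₂ s₁ := by
  intro h'
  obtain ⟨hcap, hline12⟩ := h
  obtain ⟨hcap', hline21⟩ := h'
  obtain ⟨f, hf⟩ := Finset.card_eq_one.mp hcap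
  have hd1 : (s₁ \ s₂).card = 2 := by
    have := Finset.card_sdiff_add_card_inter s₁ s₂
    omega
  have hd2 : (s₂ \ s₁).card = 2 := by
    have := Finset.card_sdiff_add_card_inter s₂ s₁
    rw [Finset.inter_comm, hf] at this
    simp at this
    omega
  obtain ⟨a, b, hab, hab1⟩ := Finset.card_eq_two.mp hd1
  obtain ⟨d, e, hde, hde1⟩ := Finset.card_eq_two.mp hd2
  -- memberships
  have haS : a ∈ s₁ \ s₂ := by rw [hab1]; simp
  have hbS : b ∈ s₁ \ s₂ := by rw [hab1]; simp
  have hdS : d ∈ s₂ \ s₁ := by rw [hde1]; simp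
  have heS : e ∈ s₂ \ s₁ := by rw [hde1]; simp
  have hfS : f ∈ s₁ ∩ s₂ := by rw [hf]; simp
  rw [Finset.mem_sdiff] at haS hbS hdS heS
  rw [Finset.mem_inter] at hfS
  have haΛ : a ∈ Λ := hs₁ haS.1
  have hbΛ : b ∈ Λ := hs₁ hbS.1
  have hdΛ : d ∈ Λ := hs₂ hdS.1
  have heΛ : e ∈ Λ := hs₂ heS.1
  have hfΛ : f ∈ Λ := hs₁ hfS.1
  -- distinctness
  have haf : a ≠ f := fun hh => haS.2 (hh ▸ hfS.2)
  have hbf : b ≠ f := fun hh => hbS.2 (hh ▸ hfS.2)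
  have hdf : d ≠ f := fun hh => hdS.2 (hh ▸ hfS.1)
  have hef : e ≠ f := fun hh => heS.2 (hh ▸ hfS.1)
  have had : a ≠ d := fun hh => haS.2 (hh ▸ hdS.1)
  have hbd : b ≠ d := fun hh => hbS.2 (hh ▸ hdS.1)
  -- set descriptions
  have hs1eq : s₁ = {a, b, f} := by
    have h1 : s₁ \ s₂ ∪ s₁ ∩ s₂ = s₁ := Finset.sdiff_union_inter s₁ s₂
    rw [← h1, hab1, hf]
    ext x
    simp only [Finset.mem_union, Finset.mem_insert, Finset.mem_singleton]
    tauto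
  have hs2eq : s₂ = {d, e, f} := by
    have h1 : s₂ \ s₁ ∪ s₂ ∩ s₁ = s₂ := Finset.sdiff_union_inter s₂ s₁
    rw [← h1, hde1, Finset.inter_comm, hf]
    ext x
    simp only [Finset.mem_union, Finset.mem_insert, Finset.mem_singleton]
    tauto
  -- corridor conditions
  have hline12' : ∀ x y : ℝ, a x y = b x y →
      ((d x y < a x y ∨ e x y < a x y ∨ f x y < a x y) ∧
       (a x y < d x y ∨ a x y < e x y ∨ a x y < f x y)) := by
    intro x y hxy
    have hm : ((x, y, a x y) : ℝ × ℝ × ℝ) ∈ corridorSet s₂ := by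
      apply hline12
      intro g hg
      rw [hab1] at hg
      simp only [Finset.mem_insert, Finset.mem_singleton] at hg
      rcases hg with rfl | rfl
      · rfl
      · exact hxy.symm
    obtain ⟨⟨g, hg, hlt⟩, ⟨g', hg', hlt'⟩⟩ := hm
    rw [hs2eq] at hg hg'
    simp only [Finset.mem_insert, Finset.mem_singleton] at hg hg'
    constructor
    · rcases hg with rfl | rfl | rfl
      exacts [Or.inl hlt, Or.inr (Or.inl hlt), Or.inr (Or.inr hlt)]
    · rcases hg' with rfl | rfl | rfl
      exacts [Or.inl hlt', Or.inr (Or.inl hlt'), Or.inr (Or.inr hlt')]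
  have hline21' : ∀ x y : ℝ, d x y = e x y →
      ((a x y < d x y ∨ b x y < d x y ∨ f x y < d x y) ∧
       (d x y < a x y ∨ d x y < b x y ∨ d x y < f x y)) := by
    intro x y hxy
    have hm : ((x, y, d x y) : ℝ × ℝ × ℝ) ∈ corridorSet s₁ := by
      apply hline21
      intro g hg
      rw [hde1] at hg
      simp only [Finset.mem_insert, Finset.mem_singleton] at hg
      rcases hg with rfl | rfl
      · rfl
      · exact hxy.symm
    obtain ⟨⟨g, hg, hlt⟩, ⟨g', hg', hlt'⟩⟩ := hm
    rw [hs1eq] at hg hg'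
    simp only [Finset.mem_insert, Finset.mem_singleton] at hg hg'
    constructor
    · rcases hg with rfl | rfl | rfl
      exacts [Or.inl hlt, Or.inr (Or.inl hlt), Or.inr (Or.inr hlt)]
    · rcases hg' with rfl | rfl | rfl
      exacts [Or.inl hlt', Or.inr (Or.inl hlt'), Or.inr (Or.inr hlt')]
  -- affine coefficients
  obtain ⟨a1, a2, a0, hA⟩ := hΛ.1 a haΛ
  obtain ⟨b1, b2, b0, hB⟩ := hΛ.1 b hbΛ
  obtain ⟨d1, d2, d0, hD⟩ := hΛ.1 d hdΛ
  obtain ⟨e1, e2, e0, hE⟩ := hΛ.1 e heΛ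
  obtain ⟨f1, f2, f0, hF⟩ := hΛ.1 f hfΛ
  -- gradient of a - b nonzero
  have hgab : a1 - b1 ≠ 0 ∨ a2 - b2 ≠ 0 := by
    by_contra hcon
    push_neg at hcon
    obtain ⟨hc1, hc2⟩ := hcon
    obtain ⟨x, y, x', y', hne⟩ := hΛ.2.1 a haΛ b hbΛ hab
    apply hne
    rw [hA x y, hB x y, hA x' y', hB x' y']
    linear_combination (x - x') * hc1 + (y - y') * hc2
  by_cases hdet : (a1 - b1) * (d2 - e2) - (a2 - b2) * (d1 - e1) = 0
  · -- parallel case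
    have hv : (b2 - a2) ≠ 0 ∨ (a1 - b1) ≠ 0 := by
      rcases hgab with hh | hh
      · right; exact hh
      · left; intro h0; exact hh (by linarith)
    have hvab : (b2 - a2) * (a1 - b1) + (a1 - b1) * (a2 - b2) = 0 := by ring
    have hvde : (b2 - a2) * (d1 - e1) + (a1 - b1) * (d2 - e2) = 0 := by
      linear_combination hdet
    obtain ⟨q, ⟨hq1, hq2⟩, _⟩ := hΛ.2.2.1 a haΛ b hbΛ f hfΛ hab haf hbf
    obtain ⟨p, ⟨hp1, hp2⟩, _⟩ := hΛ.2.2.1 d hdΛ e heΛ f hfΛ hde hdf hef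
    obtain ⟨c1a, c1b⟩ := slope_comp a b d e f a1 a2 a0 b1 b2 b0 d1 d2 d0 e1 e2 e0
      f1 f2 f0 (b2 - a2) (a1 - b1) q.1 q.2 hA hB hD hE hF hvab hvde hq1 hq2
      (fun x y hxy => (hline12' x y hxy).2)
    obtain ⟨c2a, c2b⟩ := slope_comp d e a b f d1 d2 d0 e1 e2 e0 a1 a2 a0 b1 b2 b0
      f1 f2 f0 (b2 - a2) (a1 - b1) p.1 p.2 hD hE hA hB hF hvde hvab hp1 hp2
      (fun x y hxy => (hline21' x y hxy).2)
    have hsaf : (b2-a2)*a1 + (a1-b1)*a2 ≠ (b2-a2)*f1 + (a1-b1)*f2 := by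
      intro h0
      exact UL a b f a1 a2 a0 b1 b2 b0 f1 f2 f0 (b2-a2) (a1-b1) hA hB hF hv hvab
        (by linear_combination h0) (hΛ.2.2.1 a haΛ b hbΛ f hfΛ hab haf hbf)
    have hsad : (b2-a2)*a1 + (a1-b1)*a2 = (b2-a2)*d1 + (a1-b1)*d2 := by
      by_contra hne
      rcases lt_or_gt_of_ne hsaf with h1 | h1 <;> rcases lt_or_gt_of_ne hne with h2 | h2
      · exact c1b ⟨h2, h1⟩
      · exact c2b ⟨h2, by linarith⟩
      · exact c2a ⟨h2, by linarith⟩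
      · exact c1a ⟨h2, h1⟩
    exact UL a b d a1 a2 a0 b1 b2 b0 d1 d2 d0 (b2-a2) (a1-b1) hA hB hD hv hvab
      (by linear_combination hsad) (hΛ.2.2.1 a haΛ b hbΛ d hdΛ hab had hbd)
  · -- transversal case: the two lines meet
    have hsol : ∃ x y : ℝ, a x y = b x y ∧ d x y = e x y := by
      have hdet' : (a1 - b1) * (d2 - e2) - (a2 - b2) * (d1 - e1) ≠ 0 := hdet
      refine ⟨((a2 - b2) * (d0 - e0) - (a0 - b0) * (d2 - e2)) /
          ((a1 - b1) * (d2 - e2) - (a2 - b2) * (d1 - e1)),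
        ((a0 - b0) * (d1 - e1) - (a1 - b1) * (d0 - e0)) /
          ((a1 - b1) * (d2 - e2) - (a2 - b2) * (d1 - e1)), ?_, ?_⟩
      · rw [hA, hB]; linear_combination (-(a0 - b0)) * mul_inv_cancel₀ hdet'
      · rw [hD, hE]; linear_combination (-(d0 - e0)) * mul_inv_cancel₀ hdet'
    obtain ⟨x, y, hab_eq, hde_eq⟩ := hsol
    obtain ⟨hlow1, hup1⟩ := hline12' x y hab_eq
    obtain ⟨hlow2, hup2⟩ := hline21' x y hde_eq
    rcases hlow1 with h1 | h1 | h1 <;> rcases hup1 with h2 | h2 | h2 <;>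
      rcases hlow2 with h3 | h3 | h3 <;> rcases hup2 with h4 | h4 | h4 <;>
      linarith [hab_eq, hde_eq]
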